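/- Let d ≥ 3 and let Γ be the Odd graph O_{d+1}. For any vertex γ of Γ, the subgraph of Γ induced on Γ_d(γ) is not connected. -/

import Mathlib

open Finset

/-- The vertices of the Odd graph `O_{d+1}`: the `d`-element subsets of a fixed
`(2d+1)`-element set. -/
abbrev OddVertex (d : ℕ) : Type := {s : Finset (Fin (2 * d + 1)) // s.card = d}

/-- The Odd graph `O_{d+1}`: two `d`-subsets of a `(2d+1)`-set are adjacent whenever
they are disjoint. -/
def oddGraph (d : ℕ) : SimpleGraph (OddVertex d) where
  Adj α β := α ≠ β ∧ Disjoint (α : Finset (Fin (2 * d + 1))) (β : Finset (Fin (2 * d + 1)))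
  symm := by
    constructor
    intro α β h
    exact ⟨h.1.symm, h.2.symm⟩
  loopless := by
    constructor
    intro α h
    exact h.1 rfl

namespace OddAux

variable {d : ℕ}

/-- intersection size with γ -/
def g (γ α : OddVertex d) : ℕ :=
  ((γ : Finset (Fin (2*d+1))) ∩ (α : Finset (Fin (2*d+1)))).card

lemma g_self (γ : OddVertex d) : g γ γ = d := by simp [g, γ.2]

lemma card_compl (γ : OddVertex d) :
    (Finset.univ \ (γ : Finset (Fin (2*d+1)))).card = d + 1 := by
  rw [Finset.card_sdiff_of_subset (Finset.subset_univ _), Finset.card_univ, Fintype.card_fin, γ.2]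
  omega

lemma adj_bound1 (γ : OddVertex d) {α β : OddVertex d} (h : (oddGraph d).Adj α β) :
    g γ α + g γ β ≤ d := by
  have hdisj : Disjoint ((γ:Finset (Fin (2*d+1))) ∩ α) ((γ:Finset (Fin (2*d+1))) ∩ β) := by
    rw [Finset.disjoint_left]
    intro z hz1 hz2
    simp only [Finset.mem_inter] at hz1 hz2
    exact (Finset.disjoint_left.mp h.2 hz1.2) hz2.2
  calc g γ α + g γ β = (((γ:Finset (Fin (2*d+1))) ∩ α) ∪ ((γ:Finset (Fin (2*d+1))) ∩ β)).card := by
        rw [card_union_of_disjoint hdisj]; rfl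
    _ ≤ (γ : Finset (Fin (2*d+1))).card :=
        card_le_card (union_subset inter_subset_left inter_subset_left)
    _ = d := γ.2

lemma adj_bound2 (γ : OddVertex d) {α β : OddVertex d} (h : (oddGraph d).Adj α β) :
    d ≤ g γ α + g γ β + 1 := by
  have h1 : ((β:Finset (Fin (2*d+1))) \ γ).card + ((β:Finset (Fin (2*d+1))) ∩ γ).card = d := by
    rw [Finset.card_sdiff_add_card_inter, β.2]
  have h2 : ((β:Finset (Fin (2*d+1))) \ γ) ⊆ (Finset.univ \ (γ:Finset (Fin (2*d+1)))) \ α := by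
    intro z hz
    simp only [Finset.mem_sdiff, Finset.mem_univ, true_and] at hz ⊢
    exact ⟨hz.2, fun hzα => (Finset.disjoint_left.mp h.2 hzα) hz.1⟩
  have h3 : ((Finset.univ \ (γ:Finset (Fin (2*d+1)))) \ α).card
      + ((Finset.univ \ (γ:Finset (Fin (2*d+1)))) ∩ α).card = d + 1 := by
    rw [Finset.card_sdiff_add_card_inter, card_compl]
  have h4 : ((Finset.univ \ (γ:Finset (Fin (2*d+1)))) ∩ α) = (α:Finset (Fin (2*d+1))) \ γ := by
    ext z
    simp only [Finset.mem_inter, Finset.mem_sdiff, Finset.mem_univ, true_and]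
    tauto
  have h5 : ((α:Finset (Fin (2*d+1))) \ γ).card + ((α:Finset (Fin (2*d+1))) ∩ γ).card = d := by
    rw [Finset.card_sdiff_add_card_inter, α.2]
  have hga : g γ α = ((α:Finset (Fin (2*d+1))) ∩ γ).card := by rw [g, inter_comm]
  have hgb : g γ β = ((β:Finset (Fin (2*d+1))) ∩ γ).card := by rw [g, inter_comm]
  have := card_le_card h2
  rw [h4] at h3
  omega

lemma walk_bound (γ : OddVertex d) {α β : OddVertex d} (p : (oddGraph d).Walk α β) :
    (∀ m, p.length = 2*m → (g γ α ≤ g γ β + m ∧ g γ β ≤ g γ α + m)) ∧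
    (∀ m, p.length = 2*m+1 → (d ≤ g γ α + g γ β + m + 1 ∧ g γ α + g γ β ≤ d + m)) := by
  induction p with
  | nil =>
    constructor
    · intro m hm; simp only [SimpleGraph.Walk.length_nil] at hm; omega
    · intro m hm; simp only [SimpleGraph.Walk.length_nil] at hm; omega
  | @cons u c w h q ih =>
    have e1 := adj_bound1 γ h
    have e2 := adj_bound2 γ h
    constructor
    · intro m hm
      simp only [SimpleGraph.Walk.length_cons] at hm
      match m, hm with
      | m'+1, hm =>
        have hq : q.length = 2*m'+1 := by omega
        have := ih.2 m' hq
        omega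
    · intro m hm
      simp only [SimpleGraph.Walk.length_cons] at hm
      have hq : q.length = 2*m := by omega
      have := ih.1 m hq
      omega

lemma g_le (γ β : OddVertex d) : g γ β ≤ d :=
  le_trans (card_le_card inter_subset_left) (le_of_eq γ.2)

lemma g_eq (γ β : OddVertex d) :
    g γ β = ((γ : Finset (Fin (2*d+1))) ∩ (β : Finset (Fin (2*d+1)))).card := rfl

lemma adj_of_subset_compl (hd : 1 ≤ d) {ν β : OddVertex d}
    (h : (ν : Finset (Fin (2*d+1))) ⊆ Finset.univ \ (β : Finset (Fin (2*d+1)))) :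
    (oddGraph d).Adj ν β := by
  have hdisj : Disjoint (ν : Finset (Fin (2*d+1))) (β : Finset (Fin (2*d+1))) := by
    rw [Finset.disjoint_left]
    intro z hz hzβ
    exact (Finset.mem_sdiff.mp (h hz)).2 hzβ
  refine ⟨?_, hdisj⟩
  intro hEq
  rw [hEq] at hdisj
  have hb : (β : Finset (Fin (2*d+1))) = ∅ := by
    simpa using disjoint_self.mp hdisj
  have := β.2
  rw [hb] at this
  simp at this
  omega

lemma neighbor_exists (γ : OddVertex d) (hd : 1 ≤ d) {β : OddVertex d} (hlt : g γ β < d) :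
    ∃ β' μ : OddVertex d, (oddGraph d).Adj β μ ∧ (oddGraph d).Adj μ β' ∧ g γ β' = g γ β + 1 := by
  -- choose y ∈ γ \ β and x ∈ β \ γ
  have hcγ : ((γ:Finset (Fin (2*d+1))) \ β).card + ((γ:Finset (Fin (2*d+1))) ∩ β).card = d := by
    rw [Finset.card_sdiff_add_card_inter, γ.2]
  have hcβ : ((β:Finset (Fin (2*d+1))) \ γ).card + ((β:Finset (Fin (2*d+1))) ∩ γ).card = d := by
    rw [Finset.card_sdiff_add_card_inter, β.2]
  have hgβ : ((β:Finset (Fin (2*d+1))) ∩ γ).card = g γ β := by rw [g_eq, inter_comm]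
  obtain ⟨y, hy⟩ : ((γ:Finset (Fin (2*d+1))) \ β).Nonempty := by
    rw [← Finset.card_pos]; rw [g_eq] at hlt; omega
  obtain ⟨x, hx⟩ : ((β:Finset (Fin (2*d+1))) \ γ).Nonempty := by
    rw [← Finset.card_pos]; omega
  rw [Finset.mem_sdiff] at hy hx
  -- β' = insert y (β.erase x)
  have hyβ : y ∉ (β:Finset (Fin (2*d+1))) := hy.2
  have hxβ : x ∈ (β:Finset (Fin (2*d+1))) := hx.1
  have hβ'card : (insert y ((β:Finset (Fin (2*d+1))).erase x)).card = d := by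
    rw [Finset.card_insert_of_notMem (fun hc => hyβ (Finset.mem_of_mem_erase hc)),
      Finset.card_erase_of_mem hxβ, β.2]
    omega
  set β' : OddVertex d := ⟨insert y ((β:Finset (Fin (2*d+1))).erase x), hβ'card⟩ with hβ'
  -- union with β is insert y β
  have hunion : (β:Finset (Fin (2*d+1))) ∪ β' = insert y (β:Finset (Fin (2*d+1))) := by
    ext z
    simp only [hβ', Finset.mem_union, Finset.mem_insert, Finset.mem_erase]
    constructor
    · rintro (hz | hz | ⟨_, hz⟩) <;> tauto
    · rintro (rfl | hz)
      · tauto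
      · by_cases hzx : z = x
        · subst hzx; tauto
        · tauto
  have hμcard : (Finset.univ \ ((β:Finset (Fin (2*d+1))) ∪ β')).card = d := by
    rw [hunion, Finset.card_sdiff_of_subset (Finset.subset_univ _), Finset.card_univ, Fintype.card_fin,
      Finset.card_insert_of_notMem hyβ, β.2]
    omega
  set μ : OddVertex d := ⟨Finset.univ \ ((β:Finset (Fin (2*d+1))) ∪ β'), hμcard⟩ with hμ
  have hμsub1 : (μ:Finset (Fin (2*d+1))) ⊆ Finset.univ \ (β:Finset (Fin (2*d+1))) := by
    intro z hz
    simp only [hμ, Finset.mem_sdiff, Finset.mem_union, Finset.mem_univ, true_and] at hz ⊢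
    tauto
  have hμsub2 : (μ:Finset (Fin (2*d+1))) ⊆ Finset.univ \ (β':Finset (Fin (2*d+1))) := by
    intro z hz
    simp only [hμ, Finset.mem_sdiff, Finset.mem_union, Finset.mem_univ, true_and] at hz ⊢
    tauto
  refine ⟨β', μ, ((oddGraph d).adj_symm (adj_of_subset_compl hd hμsub1)), adj_of_subset_compl hd hμsub2, ?_⟩
  -- g γ β' = g γ β + 1
  have hinter : (γ:Finset (Fin (2*d+1))) ∩ β' = insert y ((γ:Finset (Fin (2*d+1))) ∩ β) := by
    ext z
    simp only [hβ', Finset.mem_inter, Finset.mem_insert, Finset.mem_erase]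
    constructor
    · rintro ⟨hzγ, rfl | ⟨_, hzβ⟩⟩ <;> tauto
    · rintro (rfl | ⟨hzγ, hzβ⟩)
      · exact ⟨hy.1, Or.inl rfl⟩
      · refine ⟨hzγ, Or.inr ⟨fun hzx => ?_, hzβ⟩⟩
        subst hzx; exact hx.2 hzγ
  rw [g_eq, g_eq, hinter, Finset.card_insert_of_notMem]
  simp only [Finset.mem_inter]
  tauto

lemma walk_to_upper (γ : OddVertex d) (hd : 1 ≤ d) :
    ∀ k, ∀ β : OddVertex d, d ≤ g γ β + k → ∃ p : (oddGraph d).Walk γ β, p.length ≤ 2*k := by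
  intro k
  induction k with
  | zero =>
    intro β hβ
    have hsub : (γ:Finset (Fin (2*d+1))) ∩ β = γ := by
      apply Finset.eq_of_subset_of_card_le inter_subset_left
      rw [γ.2, ← g_eq]; omega
    have : γ = β := by
      apply Subtype.ext
      apply Finset.eq_of_subset_of_card_le
      · rw [← hsub]; exact inter_subset_right
      · rw [γ.2, β.2]
    subst this
    exact ⟨SimpleGraph.Walk.nil, by simp⟩
  | succ k ih =>
    intro β hβ
    by_cases hk : d ≤ g γ β + k
    · obtain ⟨p, hp⟩ := ih β hk
      exact ⟨p, by omega⟩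
    · have hlt : g γ β < d := by omega
      obtain ⟨β', μ, h1, h2, h3⟩ := neighbor_exists γ hd hlt
      obtain ⟨p, hp⟩ := ih β' (by omega)
      refine ⟨p.append (SimpleGraph.Walk.cons ((oddGraph d).adj_symm h2)
        (SimpleGraph.Walk.cons ((oddGraph d).adj_symm h1) SimpleGraph.Walk.nil)), ?_⟩
      simp only [SimpleGraph.Walk.length_append, SimpleGraph.Walk.length_cons,
        SimpleGraph.Walk.length_nil]
      omega

lemma dist_le_1 (γ β : OddVertex d) (hd : 1 ≤ d) :
    (oddGraph d).dist γ β ≤ 2 * (d - g γ β) := by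
  obtain ⟨p, hp⟩ := walk_to_upper γ hd (d - g γ β) β (by have := g_le γ β; omega)
  exact le_trans (SimpleGraph.dist_le p) hp

lemma dist_le_2 (γ β : OddVertex d) (hd : 1 ≤ d) :
    (oddGraph d).dist γ β ≤ 2 * g γ β + 1 := by
  -- find ν with γ \ β ⊆ ν ⊆ univ \ β, |ν| = d
  have hsub : (γ:Finset (Fin (2*d+1))) \ β ⊆ Finset.univ \ (β:Finset (Fin (2*d+1))) := by
    intro z hz
    simp only [Finset.mem_sdiff, Finset.mem_univ, true_and] at hz ⊢
    exact hz.2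
  have hc1 : ((γ:Finset (Fin (2*d+1))) \ β).card ≤ d := by
    calc ((γ:Finset (Fin (2*d+1))) \ β).card ≤ (γ:Finset (Fin (2*d+1))).card :=
          card_le_card sdiff_subset
      _ = d := γ.2
  have hc2 : d ≤ (Finset.univ \ (β:Finset (Fin (2*d+1)))).card := by rw [card_compl]; omega
  obtain ⟨ν, hν1, hν2, hν3⟩ := Finset.exists_subsuperset_card_eq hsub hc1 hc2
  set ν' : OddVertex d := ⟨ν, hν3⟩ with hν'
  have hgν : d ≤ g γ ν' + g γ β := by
    have hsub2 : (γ:Finset (Fin (2*d+1))) \ β ⊆ (γ:Finset (Fin (2*d+1))) ∩ ν := by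
      intro z hz
      exact Finset.mem_inter.mpr ⟨(Finset.mem_sdiff.mp hz).1, hν1 hz⟩
    have h4 := card_le_card hsub2
    have h5 : ((γ:Finset (Fin (2*d+1))) \ β).card + ((γ:Finset (Fin (2*d+1))) ∩ β).card = d := by
      rw [Finset.card_sdiff_add_card_inter, γ.2]
    have hνc : (ν' : Finset (Fin (2*d+1))) = ν := rfl
    rw [g_eq, g_eq, hνc]
    omega
  obtain ⟨p, hp⟩ := walk_to_upper γ hd (g γ β) ν' hgν
  have hadj : (oddGraph d).Adj ν' β := adj_of_subset_compl hd hν2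
  refine le_trans (SimpleGraph.dist_le (p.concat hadj)) ?_
  rw [SimpleGraph.Walk.length_concat]
  omega

lemma dist_eq_iff (hd : 3 ≤ d) (γ β : OddVertex d) :
    (oddGraph d).dist γ β = d ↔ g γ β = d / 2 := by
  have hd1 : 1 ≤ d := by omega
  have hle1 := dist_le_1 γ β hd1
  have hle2 := dist_le_2 γ β hd1
  have hgle := g_le γ β
  constructor
  · intro hdist
    have hne : (oddGraph d).dist γ β ≠ 0 := by omega
    obtain ⟨p, hp⟩ := (SimpleGraph.Reachable.of_dist_ne_zero hne).exists_walk_length_eq_dist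
    rw [hdist] at hp
    have hw := walk_bound γ p
    rcases Nat.even_or_odd d with ⟨m, hm⟩ | ⟨m, hm⟩
    · have := (hw.1 m (by omega)).1
      rw [g_self] at this
      omega
    · have := (hw.2 m (by omega)).2
      rw [g_self] at this
      omega
  · intro hg
    have hub : (oddGraph d).dist γ β ≤ d := by omega
    -- lower bound
    obtain ⟨p, hp⟩ := walk_to_upper γ hd1 (d - g γ β) β (by omega)
    have hreach : (oddGraph d).Reachable γ β := ⟨p⟩
    obtain ⟨q, hq⟩ := hreach.exists_walk_length_eq_dist
    have hw := walk_bound γ q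
    rcases Nat.even_or_odd q.length with ⟨m, hm⟩ | ⟨m, hm⟩
    · have := (hw.1 m (by omega)).1
      rw [g_self] at this
      omega
    · have := (hw.2 m (by omega)).2
      rw [g_self] at this
      omega

lemma flip_even (γ : OddVertex d) (he : d % 2 = 0) {α β : OddVertex d}
    (hα : g γ α = d/2) (hβ : g γ β = d/2) (hadj : (oddGraph d).Adj α β)
    {z : Fin (2*d+1)} (hz : z ∈ (γ:Finset (Fin (2*d+1)))) :
    z ∈ (β:Finset (Fin (2*d+1))) ↔ z ∉ (α:Finset (Fin (2*d+1))) := by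
  have hkey : (γ:Finset (Fin (2*d+1))) ∩ β = (γ:Finset (Fin (2*d+1))) \ α := by
    apply Finset.eq_of_subset_of_card_le
    · intro w hw
      rw [Finset.mem_inter] at hw
      rw [Finset.mem_sdiff]
      exact ⟨hw.1, fun hwα => (Finset.disjoint_left.mp hadj.2 hwα) hw.2⟩
    · have h1 : ((γ:Finset (Fin (2*d+1))) \ α).card + g γ α = d := by
        rw [g_eq, Finset.card_sdiff_add_card_inter, γ.2]
      rw [← g_eq γ β]
      omega
  constructor
  · intro hzβ
    have : z ∈ (γ:Finset (Fin (2*d+1))) \ α := by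
      rw [← hkey, Finset.mem_inter]; exact ⟨hz, hzβ⟩
    exact (Finset.mem_sdiff.mp this).2
  · intro hzα
    have : z ∈ (γ:Finset (Fin (2*d+1))) ∩ β := by
      rw [hkey, Finset.mem_sdiff]; exact ⟨hz, hzα⟩
    exact (Finset.mem_inter.mp this).2

lemma flip_odd (γ : OddVertex d) (he : d % 2 = 1) {α β : OddVertex d}
    (hα : g γ α = d/2) (hβ : g γ β = d/2) (hadj : (oddGraph d).Adj α β)
    {z : Fin (2*d+1)} (hz : z ∉ (γ:Finset (Fin (2*d+1)))) :
    z ∈ (β:Finset (Fin (2*d+1))) ↔ z ∉ (α:Finset (Fin (2*d+1))) := by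
  have hkey : (β:Finset (Fin (2*d+1))) \ γ = (Finset.univ \ (γ:Finset (Fin (2*d+1)))) \ α := by
    apply Finset.eq_of_subset_of_card_le
    · intro w hw
      rw [Finset.mem_sdiff] at hw
      simp only [Finset.mem_sdiff, Finset.mem_univ, true_and]
      exact ⟨hw.2, fun hwα => (Finset.disjoint_left.mp hadj.2 hwα) hw.1⟩
    · have h1 : ((β:Finset (Fin (2*d+1))) \ γ).card + ((β:Finset (Fin (2*d+1))) ∩ γ).card = d := by
        rw [Finset.card_sdiff_add_card_inter, β.2]
      have h2 : ((Finset.univ \ (γ:Finset (Fin (2*d+1)))) \ α).card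
          + ((Finset.univ \ (γ:Finset (Fin (2*d+1)))) ∩ α).card = d + 1 := by
        rw [Finset.card_sdiff_add_card_inter, card_compl]
      have h3 : (Finset.univ \ (γ:Finset (Fin (2*d+1)))) ∩ α = (α:Finset (Fin (2*d+1))) \ γ := by
        ext w
        simp only [Finset.mem_inter, Finset.mem_sdiff, Finset.mem_univ, true_and]
        tauto
      have h4 : ((α:Finset (Fin (2*d+1))) \ γ).card + ((α:Finset (Fin (2*d+1))) ∩ γ).card = d := by
        rw [Finset.card_sdiff_add_card_inter, α.2]
      have h5 : g γ β = ((β:Finset (Fin (2*d+1))) ∩ γ).card := by rw [g_eq, inter_comm]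
      have h6 : g γ α = ((α:Finset (Fin (2*d+1))) ∩ γ).card := by rw [g_eq, inter_comm]
      rw [h3] at h2
      omega
  constructor
  · intro hzβ
    have : z ∈ (Finset.univ \ (γ:Finset (Fin (2*d+1)))) \ α := by
      rw [← hkey, Finset.mem_sdiff]; exact ⟨hzβ, hz⟩
    exact (Finset.mem_sdiff.mp this).2
  · intro hzα
    have : z ∈ (β:Finset (Fin (2*d+1))) \ γ := by
      rw [hkey]
      simp only [Finset.mem_sdiff, Finset.mem_univ, true_and]
      exact ⟨hz, hzα⟩
    exact (Finset.mem_sdiff.mp this).1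

lemma invariant (γ : OddVertex d) (x y : Fin (2*d+1))
    (flip : ∀ {α β : OddVertex d}, g γ α = d/2 → g γ β = d/2 → (oddGraph d).Adj α β →
      ((x ∈ (β:Finset (Fin (2*d+1))) ↔ x ∉ (α:Finset (Fin (2*d+1)))) ∧
       (y ∈ (β:Finset (Fin (2*d+1))) ↔ y ∉ (α:Finset (Fin (2*d+1)))))) :
    ∀ (a b : {α : OddVertex d | g γ α = d/2})
      (_ : ((oddGraph d).induce {α : OddVertex d | g γ α = d/2}).Walk a b),
      ((x ∈ ((a:OddVertex d):Finset (Fin (2*d+1))) ↔ y ∈ ((a:OddVertex d):Finset (Fin (2*d+1)))) ↔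
       (x ∈ ((b:OddVertex d):Finset (Fin (2*d+1))) ↔ y ∈ ((b:OddVertex d):Finset (Fin (2*d+1))))) := by
  intro a b p
  induction p with
  | nil => rfl
  | @cons u c w h q ih =>
    have h' : (oddGraph d).Adj ↑u ↑c := h
    have hf := flip u.2 c.2 h'
    tauto

lemma mk_vertex (γ : OddVertex d) {A B : Finset (Fin (2*d+1))}
    (hA : A ⊆ γ) (hAc : A.card = d/2)
    (hB : B ⊆ Finset.univ \ (γ:Finset (Fin (2*d+1)))) (hBc : B.card = d - d/2) :
    ∃ α : OddVertex d, ((α:Finset (Fin (2*d+1))) = A ∪ B) ∧ g γ α = d/2 := by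
  have hdisj : Disjoint A B := by
    rw [Finset.disjoint_left]
    intro z hzA hzB
    exact (Finset.mem_sdiff.mp (hB hzB)).2 (hA hzA)
  have hcard : (A ∪ B).card = d := by
    rw [card_union_of_disjoint hdisj, hAc, hBc]
    have := Nat.div_le_self d 2
    omega
  refine ⟨⟨A ∪ B, hcard⟩, rfl, ?_⟩
  have hI : (γ:Finset (Fin (2*d+1))) ∩ (A ∪ B) = A := by
    ext z
    simp only [Finset.mem_inter, Finset.mem_union]
    constructor
    · rintro ⟨hzγ, hz | hz⟩
      · exact hz
      · exact absurd hzγ (Finset.mem_sdiff.mp (hB hz)).2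
    · intro hz
      exact ⟨hA hz, Or.inl hz⟩
  rw [g_eq]
  show ((γ:Finset (Fin (2*d+1))) ∩ (A ∪ B)).card = d/2
  rw [hI, hAc]

end OddAux

open OddAux

/-- the `d`-th subconstituent of the Odd graph `O_{d+1}` (`d ≥ 3`) with
respect to any vertex is not connected. -/
theorem oddGraph_last_subconstituent_not_connected (d : ℕ) (hd : 3 ≤ d) (γ : OddVertex d) :
    ¬ ((oddGraph d).induce {α : OddVertex d | (oddGraph d).dist γ α = d}).Connected := by
  have hset : {α : OddVertex d | (oddGraph d).dist γ α = d} = {α : OddVertex d | g γ α = d/2} := by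
    ext α
    exact dist_eq_iff hd γ α
  rw [hset]
  intro hcon
  -- pick x ≠ y on the relevant side, build u, v
  rcases Nat.even_or_odd d with hpar | hpar
  · -- even case : side is γ
    have he : d % 2 = 0 := Nat.even_iff.mp hpar
    have h2d : 2 ≤ (γ:Finset (Fin (2*d+1))).card := by rw [γ.2]; omega
    obtain ⟨x, hx, y, hy, hxy⟩ := Finset.one_lt_card.mp (by omega : 1 < (γ:Finset (Fin (2*d+1))).card)
    -- u : contains both x and y
    have hxysub : {x, y} ⊆ (γ:Finset (Fin (2*d+1))) := by
      intro z hz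
      rcases Finset.mem_insert.mp hz with rfl | hz
      · exact hx
      · rw [Finset.mem_singleton.mp hz]; exact hy
    have hxyc : ({x, y} : Finset (Fin (2*d+1))).card = 2 := by
      rw [Finset.card_insert_of_notMem (by simpa using hxy), Finset.card_singleton]
    obtain ⟨A₁, hA₁s, hA₁g, hA₁c⟩ := Finset.exists_subsuperset_card_eq (n := d/2) hxysub
      (by rw [hxyc]; omega) (by rw [γ.2]; exact Nat.div_le_self d 2)
    obtain ⟨B₁, -, hB₁g, hB₁c⟩ := Finset.exists_subsuperset_card_eq (n := d - d/2)
      (Finset.empty_subset (Finset.univ \ (γ:Finset (Fin (2*d+1)))))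
      (by simp) (by rw [card_compl γ]; omega)
    obtain ⟨u, hu_eq, hu⟩ := mk_vertex γ hA₁g hA₁c hB₁g hB₁c
    -- v : contains x, not y
    have hxsub : {x} ⊆ (γ:Finset (Fin (2*d+1))).erase y := by
      intro z hz
      rw [Finset.mem_singleton.mp hz]
      exact Finset.mem_erase.mpr ⟨hxy, hx⟩
    obtain ⟨A₂, hA₂s, hA₂g, hA₂c⟩ := Finset.exists_subsuperset_card_eq (n := d/2) hxsub
      (by simp; omega) (by rw [Finset.card_erase_of_mem hy, γ.2]; omega)
    obtain ⟨v, hv_eq, hv⟩ := mk_vertex γ ((hA₂g).trans (Finset.erase_subset _ _)) hA₂c hB₁g hB₁c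
    -- memberships
    have hxu : x ∈ (u:Finset (Fin (2*d+1))) := by
      rw [hu_eq]; exact Finset.mem_union_left _ (hA₁s (by simp))
    have hyu : y ∈ (u:Finset (Fin (2*d+1))) := by
      rw [hu_eq]; exact Finset.mem_union_left _ (hA₁s (by simp))
    have hxv : x ∈ (v:Finset (Fin (2*d+1))) := by
      rw [hv_eq]; exact Finset.mem_union_left _ (hA₂s (by simp))
    have hyv : y ∉ (v:Finset (Fin (2*d+1))) := by
      rw [hv_eq]
      intro hmem
      rcases Finset.mem_union.mp hmem with hm | hm
      · exact absurd (Finset.mem_erase.mp (hA₂g hm)).1 (by simp)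
      · exact (Finset.mem_sdiff.mp (hB₁g hm)).2 hy
    -- contradiction via invariant
    have hreach := hcon.preconnected ⟨u, hu⟩ ⟨v, hv⟩
    obtain ⟨p⟩ := hreach
    have hinv := invariant γ x y
      (fun {α β} hα hβ hadj =>
        ⟨flip_even γ he hα hβ hadj hx, flip_even γ he hα hβ hadj hy⟩) ⟨u, hu⟩ ⟨v, hv⟩ p
    simp only at hinv
    tauto
  · -- odd case : side is univ \ γ
    have he : d % 2 = 1 := Nat.odd_iff.mp hpar
    have h2d : 2 ≤ (Finset.univ \ (γ:Finset (Fin (2*d+1)))).card := by rw [card_compl γ]; omega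
    obtain ⟨x, hx, y, hy, hxy⟩ := Finset.one_lt_card.mp
      (by omega : 1 < (Finset.univ \ (γ:Finset (Fin (2*d+1)))).card)
    have hxysub : {x, y} ⊆ Finset.univ \ (γ:Finset (Fin (2*d+1))) := by
      intro z hz
      rcases Finset.mem_insert.mp hz with rfl | hz
      · exact hx
      · rw [Finset.mem_singleton.mp hz]; exact hy
    have hxyc : ({x, y} : Finset (Fin (2*d+1))).card = 2 := by
      rw [Finset.card_insert_of_notMem (by simpa using hxy), Finset.card_singleton]
    obtain ⟨B₁, hB₁s, hB₁g, hB₁c⟩ := Finset.exists_subsuperset_card_eq (n := d - d/2) hxysub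
      (by rw [hxyc]; omega) (by rw [card_compl γ]; omega)
    obtain ⟨A₁, -, hA₁g, hA₁c⟩ := Finset.exists_subsuperset_card_eq (n := d/2)
      (Finset.empty_subset (γ:Finset (Fin (2*d+1))))
      (by simp) (by rw [γ.2]; exact Nat.div_le_self d 2)
    obtain ⟨u, hu_eq, hu⟩ := mk_vertex γ hA₁g hA₁c hB₁g hB₁c
    have hxsub : {x} ⊆ (Finset.univ \ (γ:Finset (Fin (2*d+1)))).erase y := by
      intro z hz
      rw [Finset.mem_singleton.mp hz]
      exact Finset.mem_erase.mpr ⟨hxy, hx⟩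
    obtain ⟨B₂, hB₂s, hB₂g, hB₂c⟩ := Finset.exists_subsuperset_card_eq (n := d - d/2) hxsub
      (by simp; omega) (by rw [Finset.card_erase_of_mem hy, card_compl γ]; omega)
    obtain ⟨v, hv_eq, hv⟩ := mk_vertex γ hA₁g hA₁c
      ((hB₂g).trans (Finset.erase_subset _ _)) hB₂c
    have hxu : x ∈ (u:Finset (Fin (2*d+1))) := by
      rw [hu_eq]; exact Finset.mem_union_right _ (hB₁s (by simp))
    have hyu : y ∈ (u:Finset (Fin (2*d+1))) := by
      rw [hu_eq]; exact Finset.mem_union_right _ (hB₁s (by simp))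
    have hxv : x ∈ (v:Finset (Fin (2*d+1))) := by
      rw [hv_eq]; exact Finset.mem_union_right _ (hB₂s (by simp))
    have hyv : y ∉ (v:Finset (Fin (2*d+1))) := by
      rw [hv_eq]
      intro hmem
      rcases Finset.mem_union.mp hmem with hm | hm
      · exact (Finset.mem_sdiff.mp hy).2 (hA₁g hm)
      · exact absurd (Finset.mem_erase.mp (hB₂g hm)).1 (by simp)
    have hreach := hcon.preconnected ⟨u, hu⟩ ⟨v, hv⟩
    obtain ⟨p⟩ := hreach
    have hyγ : y ∉ (γ:Finset (Fin (2*d+1))) := (Finset.mem_sdiff.mp hy).2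
    have hxγ : x ∉ (γ:Finset (Fin (2*d+1))) := (Finset.mem_sdiff.mp hx).2
    have hinv := invariant γ x y
      (fun {α β} hα hβ hadj =>
        ⟨flip_odd γ he hα hβ hadj hxγ, flip_odd γ he hα hβ hadj hyγ⟩) ⟨u, hu⟩ ⟨v, hv⟩ p
    simp only at hinv
    tauto
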